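/- The difference Jacobian J(p_x,p_y) = ⊤_û det‖−û_*‖ det‖f̂_x − f̂_y − û∇f(x,y)‖, i.e., the coefficient of û_1···û_n in det‖−û_*‖·∏_i (f̂_{i,x} − f̂_{i,y} − û∇f_i(x,y)), is a cycle: ∂[J(p_x,p_y)] = 0 in C(x,y,f̂_x,f̂_y). -/

import Mathlib

/-!
`C(x,y,f̂_x,f̂_y,û)` is the Koszul complex over `R[x,y]` on odd generators
`f̂_{i,x}, f̂_{i,y}, ûₖ` with `∂ : f̂_{i,x} ↦ fᵢ(x)`, `f̂_{i,y} ↦ fᵢ(y)`,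
`ûₖ ↦ xₖ − yₖ`, in wedge coordinates.  The difference Jacobian `Jac g` is the
top-`û`-coefficient of `det‖−û⋆‖·∏ᵢ(f̂_{i,x} − f̂_{i,y} − û∇fᵢ(x,y))`, where
`g` are divided differences of `f`.

STATEMENT: the difference Jacobian is a cycle: `∂[J(p_x,p_y)] = 0` in
`C(x,y,f̂_x,f̂_y)`.
-/

open Finset MvPolynomial

noncomputable section

variable {σ : Type*} [DecidableEq σ] [LinearOrder σ] [Fintype σ]
variable {A : Type*} [CommRing A]

/-- The Koszul boundary operator: contraction with `∑ i, f i · f̂⋆ⁱ`. -/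
def kD (f : σ → A) (c : Finset σ → A) : Finset σ → A :=
  fun S => ∑ i ∈ Sᶜ, (-1 : A) ^ (S.filter (· < i)).card * f i * c (insert i S)

/-- The exterior (wedge) product in coordinates. -/
def kmul (a b : Finset σ → A) : Finset σ → A :=
  fun U => ∑ S ∈ U.powerset,
    (-1 : A) ^ (∑ i ∈ S, ((U \ S).filter (· < i)).card) * a S * b (U \ S)

/-- The identity element `1` of the Koszul complex. -/
def kone : Finset σ → A := fun S => if S = ∅ then 1 else 0

set_option linter.unusedSectionVars false

def oneForm (c : σ → A) : Finset σ → A := fun S => ∑ j, if S = {j} then c j else 0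

lemma kD_kone (w : σ → A) : kD w (kone : Finset σ → A) = 0 := by
  funext S
  simp only [kD, kone, Pi.zero_apply]
  apply Finset.sum_eq_zero
  intro i hi
  rw [if_neg (by simp [Finset.insert_ne_empty]), mul_zero]

lemma kmul_zero (a : Finset σ → A) : kmul a (0 : Finset σ → A) = 0 := by
  funext U; simp [kmul]

lemma kmul_oneForm (c : σ → A) (b : Finset σ → A) (U : Finset σ) :
    kmul (oneForm c) b U =
      ∑ j ∈ U, (-1 : A) ^ ((U.erase j).filter (· < j)).card * c j * b (U.erase j) := by
  simp only [kmul, oneForm]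
  have h1 : ∀ T ∈ U.powerset,
      (-1 : A) ^ (∑ i ∈ T, ((U \ T).filter (· < i)).card) * (∑ j, if T = {j} then c j else 0) *
        b (U \ T)
      = ∑ j, if T = {j} then
          (-1 : A) ^ (∑ i ∈ T, ((U \ T).filter (· < i)).card) * c j * b (U \ T) else 0 := by
    intro T _
    rw [Finset.mul_sum, Finset.sum_mul]
    refine Finset.sum_congr rfl fun j _ => ?_
    by_cases h : T = {j} <;> simp [h]
  rw [Finset.sum_congr rfl h1, Finset.sum_comm]
  have h2 : ∀ j : σ, (∑ T ∈ U.powerset, if T = {j} then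
      (-1 : A) ^ (∑ i ∈ T, ((U \ T).filter (· < i)).card) * c j * b (U \ T) else 0)
      = if j ∈ U then (-1 : A) ^ ((U.erase j).filter (· < j)).card * c j * b (U.erase j)
        else 0 := by
    intro j
    rw [Finset.sum_ite_eq' U.powerset ({j} : Finset σ)]
    simp [Finset.singleton_subset_iff, ← Finset.erase_eq]
  rw [Finset.sum_congr rfl fun j _ => h2 j]
  simp [Finset.sum_ite_mem]

lemma sign_aux {i j : σ} (T : Finset σ) (hij : i ≠ j) (hi : i ∉ T) (hj : j ∉ T) :
    (-1 : A) ^ ((insert j T).filter (· < i)).card *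
      (-1 : A) ^ ((insert i T).filter (· < j)).card
    = -((-1 : A) ^ (T.filter (· < j)).card * (-1 : A) ^ (T.filter (· < i)).card) := by
  rcases lt_or_gt_of_ne hij with h | h
  · rw [Finset.filter_insert, if_neg (by simp [not_lt.2 h.le]),
      Finset.filter_insert, if_pos h, Finset.card_insert_of_notMem (by simp [hi]),
      pow_succ]
    ring
  · rw [Finset.filter_insert, if_pos h, Finset.filter_insert,
      if_neg (by simp [not_lt.2 h.le]),
      Finset.card_insert_of_notMem (by simp [hj]), pow_succ]
    ring

lemma kD_kmul_oneForm (w c : σ → A) (b : Finset σ → A) :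
    kD w (kmul (oneForm c) b) =
      fun S => (∑ j, w j * c j) * b S - kmul (oneForm c) (kD w b) S := by
  funext S
  rw [eq_sub_iff_add_eq]
  -- compute LHS first summand
  have hA : kD w (kmul (oneForm c) b) S
      = (∑ i ∈ Sᶜ, w i * c i) * b S +
        ∑ i ∈ Sᶜ, ∑ j ∈ S,
          ((-1 : A) ^ (S.filter (· < i)).card * w i *
            ((-1 : A) ^ ((insert i (S.erase j)).filter (· < j)).card * c j *
              b (insert i (S.erase j)))) := by
    simp only [kD]
    rw [Finset.sum_mul, ← Finset.sum_add_distrib]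
    refine Finset.sum_congr rfl fun i hi => ?_
    have hiS : i ∉ S := by simpa using hi
    rw [kmul_oneForm, Finset.sum_insert hiS, Finset.erase_insert hiS, mul_add]
    congr 1
    · rw [← mul_assoc, ← mul_assoc]
      rw [show (-1 : A) ^ (S.filter (· < i)).card * w i *
          ((-1 : A) ^ (S.filter (· < i)).card) * c i
          = ((-1 : A) ^ (S.filter (· < i)).card * (-1 : A) ^ (S.filter (· < i)).card)
            * (w i * c i) by ring, ← pow_add,
        Even.neg_one_pow ⟨_, rfl⟩, one_mul]
    · rw [Finset.mul_sum]
      refine Finset.sum_congr rfl fun j hj => ?_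
      have hij : i ≠ j := fun h => hiS (h ▸ hj)
      rw [Finset.erase_insert_of_ne hij]
  have hB : kmul (oneForm c) (kD w b) S
      = (∑ j ∈ S, w j * c j) * b S +
        ∑ j ∈ S, ∑ i ∈ Sᶜ,
          ((-1 : A) ^ ((S.erase j).filter (· < j)).card * c j *
            ((-1 : A) ^ ((S.erase j).filter (· < i)).card * w i *
              b (insert i (S.erase j)))) := by
    rw [kmul_oneForm, Finset.sum_mul, ← Finset.sum_add_distrib]
    refine Finset.sum_congr rfl fun j hj => ?_
    simp only [kD]
    rw [Finset.compl_erase, Finset.sum_insert (by simp [hj]), mul_add]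
    rw [Finset.insert_erase hj]
    congr 1
    rw [show (-1 : A) ^ ((S.erase j).filter (· < j)).card * c j *
        ((-1 : A) ^ ((S.erase j).filter (· < j)).card * w j * b S)
        = ((-1 : A) ^ ((S.erase j).filter (· < j)).card *
           (-1 : A) ^ ((S.erase j).filter (· < j)).card) * (w j * c j * b S) by ring,
      ← pow_add, Even.neg_one_pow ⟨_, rfl⟩, one_mul, mul_assoc]
    rw [Finset.mul_sum]
  rw [hA, hB]
  have hcross : (∑ i ∈ Sᶜ, ∑ j ∈ S,
      ((-1 : A) ^ (S.filter (· < i)).card * w i *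
        ((-1 : A) ^ ((insert i (S.erase j)).filter (· < j)).card * c j *
          b (insert i (S.erase j)))))
      = -∑ j ∈ S, ∑ i ∈ Sᶜ,
          ((-1 : A) ^ ((S.erase j).filter (· < j)).card * c j *
            ((-1 : A) ^ ((S.erase j).filter (· < i)).card * w i *
              b (insert i (S.erase j)))) := by
    rw [Finset.sum_comm, ← Finset.sum_neg_distrib]
    refine Finset.sum_congr rfl fun j hj => ?_
    rw [← Finset.sum_neg_distrib]
    refine Finset.sum_congr rfl fun i hi => ?_
    have hiS : i ∉ S := by simpa using hi
    have hij : i ≠ j := fun h => hiS (h ▸ hj)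
    have hkey := sign_aux (A := A) (S.erase j) hij (fun h => hiS (Finset.mem_of_mem_erase h))
      (Finset.notMem_erase j S)
    have hS : S.filter (· < i) = (insert j (S.erase j)).filter (· < i) := by
      rw [Finset.insert_erase hj]
    rw [hS]
    calc (-1 : A) ^ ((insert j (S.erase j)).filter (· < i)).card * w i *
          ((-1 : A) ^ ((insert i (S.erase j)).filter (· < j)).card * c j *
            b (insert i (S.erase j)))
        = ((-1 : A) ^ ((insert j (S.erase j)).filter (· < i)).card *
           (-1 : A) ^ ((insert i (S.erase j)).filter (· < j)).card) *
            (w i * c j * b (insert i (S.erase j))) := by ring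
      _ = -(((-1 : A) ^ ((S.erase j).filter (· < j)).card *
            (-1 : A) ^ ((S.erase j).filter (· < i)).card) *
            (w i * c j * b (insert i (S.erase j)))) := by rw [hkey]; ring
      _ = -((-1 : A) ^ ((S.erase j).filter (· < j)).card * c j *
            ((-1 : A) ^ ((S.erase j).filter (· < i)).card * w i *
              b (insert i (S.erase j)))) := by ring
  rw [hcross]
  have hsum : (∑ i ∈ Sᶜ, w i * c i) + (∑ j ∈ S, w j * c j) = ∑ j, w j * c j := by
    rw [add_comm, Finset.sum_add_sum_compl]
  rw [← hsum, add_mul]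
  ring

lemma kD_foldr (w : σ → A) (L : List (Finset σ → A))
    (h : ∀ a ∈ L, ∃ c, a = oneForm c ∧ (∑ j, w j * c j) = 0) :
    kD w (L.foldr kmul kone) = 0 := by
  induction L with
  | nil => exact kD_kone w
  | cons a L ih =>
    obtain ⟨c, rfl, hc⟩ := h a List.mem_cons_self
    have ih' := ih (fun b hb => h b (List.mem_cons_of_mem _ hb))
    show kD w (kmul (oneForm c) (L.foldr kmul kone)) = 0
    rw [kD_kmul_oneForm]
    funext S
    rw [hc, zero_mul, ih', kmul_zero]
    simp

end

noncomputable section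

/-- `R[x,y]`. -/
abbrev A2 (R : Type*) [CommRing R] (n : ℕ) := MvPolynomial (Fin n ⊕ Fin n) R

variable (R : Type*) [CommRing R] (n s : ℕ)

/-- Substitution `x`-variables: `R[z] → R[x,y]`, `zₖ ↦ xₖ`. -/
def rx : MvPolynomial (Fin n) R →ₐ[R] A2 R n :=
  aeval (fun k => X (Sum.inl k))

/-- Substitution `y`-variables: `R[z] → R[x,y]`, `zₖ ↦ yₖ`. -/
def ry : MvPolynomial (Fin n) R →ₐ[R] A2 R n :=
  aeval (fun k => X (Sum.inr k))

/-- The system `x − y`. -/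
def u : Fin n → A2 R n := fun k => X (Sum.inl k) - X (Sum.inr k)

/-- Index of the generator `f̂_{i,x}` among the wedge generators
`(f̂_x, f̂_y, û)` of `C(x,y,f̂_x,f̂_y,û)`. -/
def ex (i : Fin s) : Fin (s + s + n) := Fin.castAdd n (Fin.castAdd s i)

/-- Index of the generator `f̂_{i,y}`. -/
def ey (i : Fin s) : Fin (s + s + n) := Fin.castAdd n (Fin.natAdd s i)

/-- Index of the generator `ûₖ`. -/
def eu (k : Fin n) : Fin (s + s + n) := Fin.natAdd (s + s) k

/-- The weights of the Koszul complex `C(x,y,f̂_x,f̂_y,û)`: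
`f̂_{i,x} ↦ fᵢ(x)`, `f̂_{i,y} ↦ fᵢ(y)`, `ûₖ ↦ xₖ − yₖ`. -/
def Fw (f : Fin s → MvPolynomial (Fin n) R) : Fin (s + s + n) → A2 R n :=
  Fin.append (Fin.append (fun i => rx R n (f i)) (fun i => ry R n (f i))) (u R n)

/-- The wedge generator with index `j`. -/
def del (j : Fin (s + s + n)) : Finset (Fin (s + s + n)) → A2 R n :=
  fun S => if S = {j} then 1 else 0

/-- The cycle `f̂_{i,x} − f̂_{i,y} − û∇fᵢ(x,y)` built from divided differences
`g i : Fin n → R[x,y]` of `fᵢ`. -/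
def Ei (g : Fin s → Fin n → A2 R n) (i : Fin s) :
    Finset (Fin (s + s + n)) → A2 R n :=
  del R n s (ex n s i) - del R n s (ey n s i) -
    fun S => ∑ k, if S = {eu n s k} then g i k else 0

/-- The product `∏ᵢ (f̂_{i,x} − f̂_{i,y} − û∇fᵢ(x,y))`. -/
def Pprod (g : Fin s → Fin n → A2 R n) : Finset (Fin (s + s + n)) → A2 R n :=
  (List.ofFn (fun i : Fin s => Ei R n s g i)).foldr kmul kone

/-- The set of `û`-indices. -/
def uSet : Finset (Fin (s + s + n)) := Finset.univ.image (eu n s)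

/-- The difference Jacobian
`J(p_x,p_y) = ⊤_û det‖−û⋆‖·∏ᵢ(f̂_{i,x} − f̂_{i,y} − û∇fᵢ(x,y))`: the
top-`û`-coefficient extraction of the product of the cycles `Ei`. -/
def Jac (g : Fin s → Fin n → A2 R n) : Finset (Fin (s + s + n)) → A2 R n :=
  fun S => if Disjoint S (uSet n s) then Pprod R n s g (S ∪ uSet n s) else 0

/-- coefficients of the one-form `Ei`. -/
def cE (g : Fin s → Fin n → A2 R n) (i : Fin s) : Fin (s + s + n) → A2 R n :=
  fun j => (if j = ex n s i then 1 else 0) - (if j = ey n s i then 1 else 0) -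
    ∑ k, if j = eu n s k then g i k else 0

lemma Ei_eq (g : Fin s → Fin n → A2 R n) (i : Fin s) :
    Ei R n s g i = oneForm (cE R n s g i) := by
  funext S
  simp only [Ei, cE, oneForm, del, Pi.sub_apply]
  rw [show (∑ j, if S = {j} then ((if j = ex n s i then (1:A2 R n) else 0) -
      (if j = ey n s i then 1 else 0) - ∑ k, if j = eu n s k then g i k else 0) else 0)
    = (∑ j, if S = {j} then (if j = ex n s i then (1:A2 R n) else 0) else 0)
      - (∑ j, if S = {j} then (if j = ey n s i then (1:A2 R n) else 0) else 0)
      - (∑ j, if S = {j} then (∑ k, if j = eu n s k then g i k else 0) else 0) from ?_]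
  · congr 1
    · congr 1
      · rw [show (∑ j, if S = {j} then (if j = ex n s i then (1:A2 R n) else 0) else 0)
          = ∑ j, if j = ex n s i then (if S = {ex n s i} then (1:A2 R n) else 0) else 0 from
            Finset.sum_congr rfl fun j _ => by
              by_cases h : j = ex n s i <;> simp [h]]
        rw [Finset.sum_ite_eq' Finset.univ (ex n s i)]
        simp
      · rw [show (∑ j, if S = {j} then (if j = ey n s i then (1:A2 R n) else 0) else 0)
          = ∑ j, if j = ey n s i then (if S = {ey n s i} then (1:A2 R n) else 0) else 0 from
            Finset.sum_congr rfl fun j _ => by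
              by_cases h : j = ey n s i <;> simp [h]]
        rw [Finset.sum_ite_eq' Finset.univ (ey n s i)]
        simp
    · rw [show (∑ j, if S = {j} then (∑ k, if j = eu n s k then g i k else 0) else 0)
        = ∑ j, ∑ k, if j = eu n s k then (if S = {eu n s k} then g i k else 0) else 0 from
          Finset.sum_congr rfl fun j _ => by
            by_cases h : S = {j}
            · subst h
              rw [if_pos rfl]
              refine Finset.sum_congr rfl fun k _ => ?_
              by_cases hk : j = eu n s k <;> simp [hk]
            · rw [if_neg h]
              refine (Finset.sum_eq_zero fun k _ => ?_).symm
              by_cases hk : j = eu n s k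
              · rw [if_pos hk, if_neg (hk ▸ h)]
              · rw [if_neg hk]]
      rw [Finset.sum_comm]
      refine Finset.sum_congr rfl fun k _ => ?_
      rw [Finset.sum_ite_eq' Finset.univ (eu n s k)]
      simp
  · rw [← Finset.sum_sub_distrib, ← Finset.sum_sub_distrib]
    refine Finset.sum_congr rfl fun j _ => ?_
    by_cases h : S = {j} <;> simp [h]

lemma Fw_ex (f : Fin s → MvPolynomial (Fin n) R) (i : Fin s) :
    Fw R n s f (ex n s i) = rx R n (f i) := by
  simp only [Fw, ex, Fin.append_left]

lemma Fw_ey (f : Fin s → MvPolynomial (Fin n) R) (i : Fin s) :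
    Fw R n s f (ey n s i) = ry R n (f i) := by
  simp only [Fw, ey, Fin.append_left, Fin.append_right]

lemma Fw_eu (f : Fin s → MvPolynomial (Fin n) R) (k : Fin n) :
    Fw R n s f (eu n s k) = u R n k := by
  simp only [Fw, eu, Fin.append_right]

lemma sum_w_cE (f : Fin s → MvPolynomial (Fin n) R) (g : Fin s → Fin n → A2 R n)
    (hg : ∀ i, rx R n (f i) - ry R n (f i) = ∑ k, u R n k * g i k) (i : Fin s) :
    (∑ j, Fw R n s f j * cE R n s g i j) = 0 := by
  simp only [cE, mul_sub, Finset.mul_sum, mul_ite, mul_one, mul_zero]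
  rw [Finset.sum_sub_distrib, Finset.sum_sub_distrib,
    Finset.sum_ite_eq' Finset.univ (ex n s i), Finset.sum_ite_eq' Finset.univ (ey n s i),
    Finset.sum_comm]
  have h3 : ∀ k : Fin n, (∑ j, if j = eu n s k then Fw R n s f j * g i k else 0)
      = u R n k * g i k := by
    intro k
    rw [Finset.sum_ite_eq' Finset.univ (eu n s k)]
    simp [Fw_eu]
  rw [Finset.sum_congr rfl fun k _ => h3 k]
  simp [Fw_ex, Fw_ey, hg i]

lemma kD_Pprod (f : Fin s → MvPolynomial (Fin n) R) (g : Fin s → Fin n → A2 R n)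
    (hg : ∀ i, rx R n (f i) - ry R n (f i) = ∑ k, u R n k * g i k) :
    kD (Fw R n s f) (Pprod R n s g) = 0 := by
  refine kD_foldr _ _ ?_
  intro a ha
  rw [List.mem_ofFn] at ha
  obtain ⟨i, rfl⟩ := ha
  exact ⟨cE R n s g i, Ei_eq R n s g i, sum_w_cE R n s f g hg i⟩

lemma not_mem_uSet_lt {i : Fin (s + s + n)} (h : i ∉ uSet n s) (k : Fin n) :
    ¬ eu n s k < i := by
  have hv : (i : ℕ) < s + s := by
    by_contra hv
    exact h (Finset.mem_image.2 ⟨⟨(i : ℕ) - (s + s), by omega⟩, Finset.mem_univ _,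
      by simp [eu, Fin.ext_iff, Fin.natAdd]; omega⟩)
  intro hlt
  have : s + s + (k : ℕ) < (i : ℕ) := by simpa [eu, Fin.lt_def, Fin.natAdd] using hlt
  omega

end

/-- The difference Jacobian is a cycle. -/
theorem difference_jacobian_is_cycle {R : Type*} [CommRing R] (n s : ℕ)
    (f : Fin s → MvPolynomial (Fin n) R)
    (g : Fin s → Fin n → A2 R n)
    (hg : ∀ i, rx R n (f i) - ry R n (f i) = ∑ k, u R n k * g i k) :
    kD (Fw R n s f) (Jac R n s g) = 0 := by
  funext S
  show _ = (0 : A2 R n)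
  by_cases hd : Disjoint S (uSet n s)
  · simp only [kD, Jac]
    have key : ∀ i ∈ Sᶜ, ((-1 : A2 R n) ^ (S.filter (· < i)).card * Fw R n s f i *
        (if Disjoint (insert i S) (uSet n s) then Pprod R n s g (insert i S ∪ uSet n s) else 0))
      = if i ∈ (S ∪ uSet n s)ᶜ then
          ((-1 : A2 R n) ^ ((S ∪ uSet n s).filter (· < i)).card * Fw R n s f i *
            Pprod R n s g (insert i (S ∪ uSet n s))) else 0 := by
      intro i hi
      rw [Finset.mem_compl] at hi
      by_cases hu : i ∈ uSet n s
      · rw [if_neg, if_neg, mul_zero]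
        · simp [hu]
        · rw [Finset.disjoint_insert_left]; tauto
      · rw [if_pos (Finset.disjoint_insert_left.2 ⟨hu, hd⟩),
          if_pos (by simp [hi, hu]), Finset.insert_union]
        have hc : ((S ∪ uSet n s).filter (· < i)).card = (S.filter (· < i)).card := by
          rw [Finset.filter_union,
            (Finset.filter_eq_empty_iff (s := uSet n s)).2 (fun x hx => ?_), Finset.union_empty]
          obtain ⟨k, _, rfl⟩ := Finset.mem_image.1 hx
          exact not_mem_uSet_lt n s hu k
        rw [hc]
    rw [Finset.sum_congr rfl key, Finset.sum_ite_mem]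
    have hset : Sᶜ ∩ (S ∪ uSet n s)ᶜ = (S ∪ uSet n s)ᶜ := by
      ext x; simp
    rw [hset]
    have h0 := congrFun (kD_Pprod R n s f g hg) (S ∪ uSet n s)
    simpa [kD] using h0
  · apply Finset.sum_eq_zero
    intro i _
    simp only [Jac]
    rw [if_neg fun hc => hd (Finset.disjoint_insert_left.1 hc).2, mul_zero]
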